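/- For each α ∈ {0, 1, −1}, the family of vector fields on ℝ² given by L_n = e^{−nt} ∂_t + e^{−nt}[n + (1/2)n(n−1)α e^{−x}] ∂_x (n ∈ ℤ) is a realization of the Witt algebra: [L_m, L_n] = (m−n)L_{m+n} for all m, n ∈ ℤ. (This is the realization 𝔚₂ of Theorem 1.) -/

import Mathlib

/-- Lie bracket of smooth vector fields on `ℝ²` (coordinates `(t,x)`), identified with
`C^∞` maps `ℝ² → ℝ²`: `[X,Y](p) = (DY)(p)(X(p)) - (DX)(p)(Y(p))`. -/
noncomputable def lieBracket2 (X Y : ℝ × ℝ → ℝ × ℝ) : ℝ × ℝ → ℝ × ℝ :=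
  fun p => fderiv ℝ Y p (X p) - fderiv ℝ X p (Y p)

/-- The realization `𝔚₂`:
`L_n = e^{-nt} ∂_t + e^{-nt}[n + (1/2)n(n-1)α e^{-x}] ∂_x`. -/
noncomputable def W2field (α : ℝ) (n : ℤ) : ℝ × ℝ → ℝ × ℝ := fun p =>
  (Real.exp (-(n : ℝ) * p.1),
   Real.exp (-(n : ℝ) * p.1) *
     ((n : ℝ) + (1 / 2) * (n : ℝ) * ((n : ℝ) - 1) * α * Real.exp (-p.2)))

/-- Explicit Fréchet derivative of the field `𝔚₂` (with real parameter `r`). -/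
lemma W2_hasFDerivAt (α r : ℝ) (p : ℝ × ℝ) :
    HasFDerivAt (fun q : ℝ × ℝ =>
      (Real.exp (-r * q.1),
        Real.exp (-r * q.1) * (r + 1 / 2 * r * (r - 1) * α * Real.exp (-q.2))))
      (((Real.exp (-r * p.1) * -r) • ContinuousLinearMap.fst ℝ ℝ ℝ).prod
        (Real.exp (-r * p.1) •
            ((1 / 2 * r * (r - 1) * α) •
              ((Real.exp (-p.2) * -1) • ContinuousLinearMap.snd ℝ ℝ ℝ))
          + (r + 1 / 2 * r * (r - 1) * α * Real.exp (-p.2)) •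
              ((Real.exp (-r * p.1) * -r) • ContinuousLinearMap.fst ℝ ℝ ℝ))) p := by
  have h1 : HasFDerivAt (fun q : ℝ × ℝ => Real.exp (-r * q.1))
      ((Real.exp (-r * p.1) * -r) • ContinuousLinearMap.fst ℝ ℝ ℝ) p := by
    have hd : HasDerivAt (fun t : ℝ => Real.exp (-r * t)) (Real.exp (-r * p.1) * -r) p.1 := by
      simpa using ((hasDerivAt_id p.1).const_mul (-r)).exp
    exact hd.comp_hasFDerivAt p hasFDerivAt_fst
  have h2 : HasFDerivAt (fun q : ℝ × ℝ => Real.exp (-q.2))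
      ((Real.exp (-p.2) * -1) • ContinuousLinearMap.snd ℝ ℝ ℝ) p := by
    have hd : HasDerivAt (fun t : ℝ => Real.exp (-t)) (Real.exp (-p.2) * -1) p.2 := by
      simpa using ((hasDerivAt_id p.2).const_mul (-1)).exp
    exact hd.comp_hasFDerivAt p hasFDerivAt_snd
  exact HasFDerivAt.prodMk h1 (h1.mul (((h2.const_mul (1 / 2 * r * (r - 1) * α)).const_add r)))

/-- For each `α ∈ {0, 1, -1}`, the family `(W2field α n)` is a realization of the Witt
algebra on `ℝ²`: `[L_m, L_n] = (m - n) L_{m+n}` for all `m, n ∈ ℤ`. -/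
theorem W2_realization (α : ℝ) (hα : α = 0 ∨ α = 1 ∨ α = -1) :
    ∀ m n : ℤ, lieBracket2 (W2field α m) (W2field α n)
      = fun p => ((m : ℝ) - (n : ℝ)) • W2field α (m + n) p := by
  intro m n
  funext p
  have hm := (W2_hasFDerivAt α (m : ℝ) p).fderiv
  have hn := (W2_hasFDerivAt α (n : ℝ) p).fderiv
  have em : W2field α m = fun q : ℝ × ℝ =>
      (Real.exp (-(m:ℝ) * q.1),
        Real.exp (-(m:ℝ) * q.1) * ((m:ℝ) + 1 / 2 * (m:ℝ) * ((m:ℝ) - 1) * α * Real.exp (-q.2))) :=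
    rfl
  have en : W2field α n = fun q : ℝ × ℝ =>
      (Real.exp (-(n:ℝ) * q.1),
        Real.exp (-(n:ℝ) * q.1) * ((n:ℝ) + 1 / 2 * (n:ℝ) * ((n:ℝ) - 1) * α * Real.exp (-q.2))) :=
    rfl
  rw [lieBracket2, em, en, hm, hn]
  simp only [ContinuousLinearMap.prod_apply, ContinuousLinearMap.add_apply,
    ContinuousLinearMap.smul_apply, ContinuousLinearMap.coe_fst', ContinuousLinearMap.coe_snd',
    W2field, Prod.mk_sub_mk, Prod.smul_mk, smul_eq_mul, Int.cast_add]
  have key : Real.exp (-((m:ℝ) + (n:ℝ)) * p.1)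
      = Real.exp (-(m:ℝ) * p.1) * Real.exp (-(n:ℝ) * p.1) := by
    rw [← Real.exp_add]; ring_nf
  rw [Prod.ext_iff]
  refine ⟨?_, ?_⟩ <;> simp only [key] <;> ring
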